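/- An Apollonian network with n vertices has exactly n - 4 separating triangles. -/

import Mathlib

set_option maxHeartbeats 1000000
set_option linter.unnecessarySeqFocus false


open SimpleGraph

/-- The complete graph `K4` on the vertices `{0,1,2,3}` of `ℕ`. -/
def K4n : SimpleGraph ℕ where
  Adj x y := x ≠ y ∧ x < 4 ∧ y < 4
  symm := ⟨fun _ _ h => ⟨h.1.symm, h.2.2, h.2.1⟩⟩
  loopless := ⟨fun _ h => h.1 rfl⟩

/-- Add a new apex vertex `v` joined to the three vertices `a`, `b`, `c`. -/
def addApex (G : SimpleGraph ℕ) (v a b c : ℕ) : SimpleGraph ℕ :=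
  G ⊔ SimpleGraph.fromEdgeSet {s(v, a), s(v, b), s(v, c)}

/-- `ApollonianF G Fs` : `G` is an Apollonian network with set of (triangular) faces `Fs`,
built from `K4` by recursively subdividing a triangular face. -/
inductive ApollonianF : SimpleGraph ℕ → Set (Finset ℕ) → Prop
  | base : ApollonianF K4n {{0, 1, 2}, {0, 1, 3}, {0, 2, 3}, {1, 2, 3}}
  | subdivide (G : SimpleGraph ℕ) (Fs : Set (Finset ℕ)) (a b c v : ℕ) :
      ApollonianF G Fs → ({a, b, c} : Finset ℕ) ∈ Fs →
      (∀ y, ¬ G.Adj v y) →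
      ApollonianF (addApex G v a b c)
        ((Fs \ {({a, b, c} : Finset ℕ)}) ∪ {{v, a, b}, {v, a, c}, {v, b, c}})

/-- A graph (on vertex set its support) is an Apollonian network. -/
def IsApollonian (G : SimpleGraph ℕ) : Prop := ∃ Fs, ApollonianF G Fs

/-- The triangles (sets of three pairwise adjacent vertices) of `G`. -/
def triangleSet (G : SimpleGraph ℕ) : Set (Finset ℕ) :=
  {t | ∃ a b c : ℕ, t = {a, b, c} ∧ G.Adj a b ∧ G.Adj a c ∧ G.Adj b c}

/-- A triangle is separating if deleting its vertices disconnects the graph. -/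
def IsSeparatingTriangle (G : SimpleGraph ℕ) (t : Finset ℕ) : Prop :=
  t ∈ triangleSet G ∧ ¬ (G.induce (G.support \ ↑t)).Connected

/-- `G` is (isomorphic to) the complete graph on four vertices. -/
def IsK4Graph (G : SimpleGraph ℕ) : Prop :=
  ∃ s : Finset ℕ, ↑s = G.support ∧ s.card = 4 ∧ ∀ a ∈ s, ∀ b ∈ s, a ≠ b → G.Adj a b

/-- Delete the vertex `v` (and all incident edges). -/
def deleteVertex (G : SimpleGraph ℕ) (v : ℕ) : SimpleGraph ℕ where
  Adj x y := G.Adj x y ∧ x ≠ v ∧ y ≠ v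
  symm := ⟨fun _ _ h => ⟨h.1.symm, h.2.2, h.2.1⟩⟩
  loopless := ⟨fun x h => G.loopless.1 x h.1⟩

lemma reach_map {V W : Type*} {G : SimpleGraph V} {H : SimpleGraph W} (f : V → W)
    (hf : ∀ x y, G.Adj x y → f x = f y ∨ H.Adj (f x) (f y)) {x y : V}
    (h : G.Reachable x y) : H.Reachable (f x) (f y) := by
  obtain ⟨p⟩ := h
  induction p with
  | nil => exact Reachable.refl _
  | cons h' p ih =>
    rcases hf _ _ h' with he | ha
    · rw [he]; exact ih
    · exact ha.reachable.trans ih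

lemma mem_triangleSet_iff {G : SimpleGraph ℕ} {t : Finset ℕ} :
    t ∈ triangleSet G ↔ t.card = 3 ∧ ∀ x ∈ t, ∀ y ∈ t, x ≠ y → G.Adj x y := by
  constructor
  · rintro ⟨a, b, c, rfl, hab, hac, hbc⟩
    constructor
    · rw [Finset.card_eq_three]
      exact ⟨a, b, c, hab.ne, hac.ne, hbc.ne, rfl⟩
    · intro x hx y hy hxy
      simp only [Finset.mem_insert, Finset.mem_singleton] at hx hy
      rcases hx with rfl | rfl | rfl <;> rcases hy with rfl | rfl | rfl <;>
        first | exact absurd rfl hxy | assumption | exact hab.symm | exact hac.symm | exact hbc.symm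
  · rintro ⟨hc, hadj⟩
    rw [Finset.card_eq_three] at hc
    obtain ⟨a, b, c, hab, hac, hbc, rfl⟩ := hc
    refine ⟨a, b, c, rfl, ?_, ?_, ?_⟩ <;> apply hadj <;> simp [hab, hac, hbc]

lemma triangle_subset_support {G : SimpleGraph ℕ} {t : Finset ℕ} (ht : t ∈ triangleSet G) :
    ↑t ⊆ G.support := by
  rw [mem_triangleSet_iff] at ht
  intro x hx
  have h3 : 1 < t.card := by omega
  obtain ⟨y, hy, hxy⟩ := Finset.exists_mem_ne h3 x
  exact ⟨y, ht.2 x hx y hy hxy.symm⟩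

lemma triangleSet_finite {G : SimpleGraph ℕ} (h : G.support.Finite) :
    (triangleSet G).Finite := by
  apply Set.Finite.subset (Finset.finite_toSet h.toFinset.powerset)
  intro t ht
  simp only [Finset.mem_coe, Finset.mem_powerset]
  intro x hx
  exact (Set.Finite.mem_toFinset h).2 (triangle_subset_support ht hx)

lemma addApex_adj {G : SimpleGraph ℕ} {v a b c : ℕ} (hva : v ≠ a) (hvb : v ≠ b)
    (hvc : v ≠ c) {x y : ℕ} :
    (addApex G v a b c).Adj x y ↔ G.Adj x y ∨
      (x = v ∧ (y = a ∨ y = b ∨ y = c)) ∨ (y = v ∧ (x = a ∨ x = b ∨ x = c)) := by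
  simp only [addApex, sup_adj, fromEdgeSet_adj, Set.mem_insert_iff, Set.mem_singleton_iff,
    Sym2.eq, Sym2.rel_iff', Prod.mk.injEq, Prod.swap_prod_mk]
  constructor
  · rintro (h | ⟨(⟨rfl,rfl⟩|⟨rfl,rfl⟩)|(⟨rfl,rfl⟩|⟨rfl,rfl⟩)|(⟨rfl,rfl⟩|⟨rfl,rfl⟩), hne⟩) <;> tauto
  · rintro (h | ⟨rfl, (rfl|rfl|rfl)⟩ | ⟨rfl, (rfl|rfl|rfl)⟩) <;> tauto

lemma addApex_support {G : SimpleGraph ℕ} {v a b c : ℕ} (hv : ∀ y, ¬ G.Adj v y)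
    (ha : a ∈ G.support) (hb : b ∈ G.support) (hc : c ∈ G.support) :
    (addApex G v a b c).support = G.support ∪ {v} := by
  have hvs : v ∉ G.support := fun ⟨y, hy⟩ => hv y hy
  have hva : v ≠ a := fun h => hvs (h ▸ ha)
  have hvb : v ≠ b := fun h => hvs (h ▸ hb)
  have hvc : v ≠ c := fun h => hvs (h ▸ hc)
  ext x
  simp only [mem_support, Set.mem_union, Set.mem_singleton_iff, addApex_adj hva hvb hvc]
  constructor
  · rintro ⟨y, (h | ⟨rfl, _⟩ | ⟨rfl, (rfl|rfl|rfl)⟩)⟩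
    · exact Or.inl ⟨y, h⟩
    · exact Or.inr rfl
    · exact Or.inl ha
    · exact Or.inl hb
    · exact Or.inl hc
  · rintro (⟨y, h⟩ | rfl)
    · exact ⟨y, Or.inl h⟩
    · exact ⟨a, Or.inr (Or.inl ⟨rfl, Or.inl rfl⟩)⟩

lemma addApex_triangleSet {G : SimpleGraph ℕ} {v a b c : ℕ} (hv : ∀ y, ¬ G.Adj v y)
    (hab : G.Adj a b) (hac : G.Adj a c) (hbc : G.Adj b c) :
    triangleSet (addApex G v a b c) =
      triangleSet G ∪ {{v, a, b}, {v, a, c}, {v, b, c}} := by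
  have hvs : v ∉ G.support := fun ⟨y, hy⟩ => hv y hy
  have hva : v ≠ a := fun h => hvs (h ▸ ⟨b, hab⟩)
  have hvb : v ≠ b := fun h => hvs (h ▸ ⟨a, hab.symm⟩)
  have hvc : v ≠ c := fun h => hvs (h ▸ ⟨a, hac.symm⟩)
  have hGle : ∀ x y, G.Adj x y → (addApex G v a b c).Adj x y := fun x y h =>
    (addApex_adj hva hvb hvc).2 (Or.inl h)
  have hvadj : ∀ p, (addApex G v a b c).Adj v p → p = a ∨ p = b ∨ p = c := by
    intro p hp
    rcases (addApex_adj hva hvb hvc).1 hp with h | ⟨_, h⟩ | ⟨rfl, _⟩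
    · exact absurd h (hv p)
    · exact h
    · exact absurd rfl hp.ne
  ext t
  simp only [Set.mem_union, Set.mem_insert_iff, Set.mem_singleton_iff]
  constructor
  · intro ht
    rw [mem_triangleSet_iff] at ht
    obtain ⟨hcard, hadj⟩ := ht
    by_cases hvt : v ∈ t
    · right
      obtain ⟨x, y, z, hxy, hxz, hyz, rfl⟩ := Finset.card_eq_three.1 hcard
      have key : ∀ p q : ℕ, p ∈ ({x,y,z} : Finset ℕ) → q ∈ ({x,y,z} : Finset ℕ) →
          p ≠ v → q ≠ v → p ≠ q → v ∈ ({x,y,z} : Finset ℕ) →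
          (p = a ∨ p = b ∨ p = c) := by
        intro p q hp hq hpv hqv hpq hvm
        exact hvadj p ((hadj v hvm p hp (Ne.symm hpv)))
      simp only [Finset.mem_insert, Finset.mem_singleton] at hvt
      rcases hvt with rfl | rfl | rfl
      · have hy' := hvadj y (hadj v (by simp) y (by simp) hxy)
        have hz' := hvadj z (hadj v (by simp) z (by simp) hxz)
        rcases hy' with rfl|rfl|rfl <;> rcases hz' with rfl|rfl|rfl <;>
          first
          | exact absurd rfl hyz
          | (left; ext w; simp only [Finset.mem_insert, Finset.mem_singleton] <;> tauto)
          | (right; left; ext w; simp only [Finset.mem_insert, Finset.mem_singleton] <;> tauto)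
          | (right; right; ext w; simp only [Finset.mem_insert, Finset.mem_singleton] <;> tauto)
      · have hy' := hvadj x (hadj v (by simp) x (by simp) (Ne.symm hxy))
        have hz' := hvadj z (hadj v (by simp) z (by simp) hyz)
        rcases hy' with rfl|rfl|rfl <;> rcases hz' with rfl|rfl|rfl <;>
          first
          | exact absurd rfl hxz
          | (left; ext w; simp only [Finset.mem_insert, Finset.mem_singleton] <;> tauto)
          | (right; left; ext w; simp only [Finset.mem_insert, Finset.mem_singleton] <;> tauto)
          | (right; right; ext w; simp only [Finset.mem_insert, Finset.mem_singleton] <;> tauto)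
      · have hy' := hvadj x (hadj v (by simp) x (by simp) (Ne.symm hxz))
        have hz' := hvadj y (hadj v (by simp) y (by simp) (Ne.symm hyz))
        rcases hy' with rfl|rfl|rfl <;> rcases hz' with rfl|rfl|rfl <;>
          first
          | exact absurd rfl hxy
          | (left; ext w; simp only [Finset.mem_insert, Finset.mem_singleton] <;> tauto)
          | (right; left; ext w; simp only [Finset.mem_insert, Finset.mem_singleton] <;> tauto)
          | (right; right; ext w; simp only [Finset.mem_insert, Finset.mem_singleton] <;> tauto)
    · left
      rw [mem_triangleSet_iff]
      refine ⟨hcard, fun x hx y hy hxy => ?_⟩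
      rcases (addApex_adj hva hvb hvc).1 (hadj x hx y hy hxy) with h | ⟨rfl, _⟩ | ⟨rfl, _⟩
      · exact h
      · exact absurd hx hvt
      · exact absurd hy hvt
  · rintro (ht | rfl | rfl | rfl)
    · rw [mem_triangleSet_iff] at ht ⊢
      exact ⟨ht.1, fun x hx y hy hxy => hGle x y (ht.2 x hx y hy hxy)⟩
    · exact ⟨v, a, b, rfl, (addApex_adj hva hvb hvc).2 (Or.inr (Or.inl ⟨rfl, Or.inl rfl⟩)),
        (addApex_adj hva hvb hvc).2 (Or.inr (Or.inl ⟨rfl, Or.inr (Or.inl rfl)⟩)), hGle _ _ hab⟩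
    · exact ⟨v, a, c, rfl, (addApex_adj hva hvb hvc).2 (Or.inr (Or.inl ⟨rfl, Or.inl rfl⟩)),
        (addApex_adj hva hvb hvc).2 (Or.inr (Or.inl ⟨rfl, Or.inr (Or.inr rfl)⟩)), hGle _ _ hac⟩
    · exact ⟨v, b, c, rfl, (addApex_adj hva hvb hvc).2 (Or.inr (Or.inl ⟨rfl, Or.inr (Or.inl rfl)⟩)),
        (addApex_adj hva hvb hvc).2 (Or.inr (Or.inl ⟨rfl, Or.inr (Or.inr rfl)⟩)), hGle _ _ hbc⟩

lemma adj_clique {G : SimpleGraph ℕ} {a b c : ℕ} (hab : G.Adj a b) (hac : G.Adj a c)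
    (hbc : G.Adj b c) {p q : ℕ} (hp : p = a ∨ p = b ∨ p = c) (hq : q = a ∨ q = b ∨ q = c)
    (hpq : p ≠ q) : G.Adj p q := by
  rcases hp with rfl|rfl|rfl <;> rcases hq with rfl|rfl|rfl <;>
    first | exact absurd rfl hpq | assumption | exact hab.symm | exact hac.symm | exact hbc.symm

lemma reach_induce_mono {G H : SimpleGraph ℕ} (hGH : ∀ x y, G.Adj x y → H.Adj x y)
    {s s' : Set ℕ} (hss : s ⊆ s') {x y : ↥s} (h : (G.induce s).Reachable x y) :
    (H.induce s').Reachable ⟨x, hss x.2⟩ ⟨y, hss y.2⟩ :=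
  reach_map (G := G.induce s) (H := H.induce s') (fun z => ⟨z.1, hss z.2⟩)
    (fun u w h => Or.inr (hGH u.1 w.1 h)) h

lemma induce_addApex_eq {G : SimpleGraph ℕ} {v a b c : ℕ} (hva : v ≠ a) (hvb : v ≠ b)
    (hvc : v ≠ c) {s : Set ℕ} (hvs : v ∉ s) :
    (addApex G v a b c).induce s = G.induce s := by
  ext ⟨x, hx⟩ ⟨y, hy⟩
  simp only [comap_adj, Function.Embedding.coe_subtype, addApex_adj hva hvb hvc]
  constructor
  · rintro (h | ⟨rfl, _⟩ | ⟨rfl, _⟩)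
    · exact h
    · exact absurd hx hvs
    · exact absurd hy hvs
  · exact Or.inl

lemma connected_insert_apex {G : SimpleGraph ℕ} {v a b c : ℕ} (hva : v ≠ a) (hvb : v ≠ b)
    (hvc : v ≠ c) {s : Set ℕ} {a₀ : ℕ} (ha₀s : a₀ ∈ s) (ha₀ : a₀ = a ∨ a₀ = b ∨ a₀ = c)
    (hconn : (G.induce s).Connected) :
    ((addApex G v a b c).induce (insert v s)).Connected := by
  rw [connected_iff_exists_forall_reachable]
  refine ⟨⟨a₀, Set.mem_insert_of_mem _ ha₀s⟩, ?_⟩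
  rintro ⟨w, hw⟩
  rcases Set.mem_insert_iff.1 hw with hwv | hws
  · have hadj : (addApex G v a b c).Adj a₀ w := by
      rw [addApex_adj hva hvb hvc]
      exact Or.inr (Or.inr ⟨hwv, ha₀⟩)
    exact Adj.reachable (by exact hadj)
  · have := hconn.preconnected ⟨a₀, ha₀s⟩ ⟨w, hws⟩
    exact reach_induce_mono (fun x y h => (addApex_adj hva hvb hvc).2 (Or.inl h))
      (Set.subset_insert v s) this

lemma not_connected_insert_apex {G : SimpleGraph ℕ} {v a b c : ℕ} (hv : ∀ y, ¬ G.Adj v y)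
    (hab : G.Adj a b) (hac : G.Adj a c) (hbc : G.Adj b c)
    {s : Set ℕ} (hvs : v ∉ s) {a₀ : ℕ} (ha₀s : a₀ ∈ s) (ha₀ : a₀ = a ∨ a₀ = b ∨ a₀ = c)
    (hdis : ¬ (G.induce s).Connected) :
    ¬ ((addApex G v a b c).induce (insert v s)).Connected := by
  have hvs' : v ∉ G.support := fun ⟨y, hy⟩ => hv y hy
  have hva : v ≠ a := fun h => hvs' (h ▸ ⟨b, hab⟩)
  have hvb : v ≠ b := fun h => hvs' (h ▸ ⟨a, hab.symm⟩)
  have hvc : v ≠ c := fun h => hvs' (h ▸ ⟨a, hac.symm⟩)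
  intro hconn
  apply hdis
  have hne : Nonempty ↥s := ⟨⟨a₀, ha₀s⟩⟩
  rw [connected_iff]
  refine ⟨?_, hne⟩
  have hmem : ∀ z : ℕ, z ∈ insert v s → z ≠ v → z ∈ s := by
    intro z hz hzv
    rcases Set.mem_insert_iff.1 hz with h | h
    · exact absurd h hzv
    · exact h
  set f : ↥(insert v s) → ↥s := fun z =>
    if h : (z : ℕ) = v then ⟨a₀, ha₀s⟩ else ⟨(z : ℕ), hmem _ z.2 h⟩ with hf
  have hfcond : ∀ x y : ↥(insert v s), ((addApex G v a b c).induce (insert v s)).Adj x y →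
      f x = f y ∨ (G.induce s).Adj (f x) (f y) := by
    rintro ⟨x, hx⟩ ⟨y, hy⟩ hadj
    have hadj' : (addApex G v a b c).Adj x y := hadj
    rw [addApex_adj hva hvb hvc] at hadj'
    rcases hadj' with h | ⟨hxv, hy'⟩ | ⟨hyv, hx'⟩
    · have hxv : x ≠ v := fun he => hv y (he ▸ h)
      have hyv : y ≠ v := fun he => hv x (he ▸ h.symm)
      right
      have h1 : f ⟨x, hx⟩ = ⟨x, hmem _ hx hxv⟩ := by simp [hf, hxv]
      have h2 : f ⟨y, hy⟩ = ⟨y, hmem _ hy hyv⟩ := by simp [hf, hyv]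
      rw [h1, h2]
      exact h
    · have hyv : y ≠ v := by
        intro he
        rcases hy' with h|h|h
        exacts [hva (he.symm.trans h), hvb (he.symm.trans h), hvc (he.symm.trans h)]
      have h1 : f ⟨x, hx⟩ = ⟨a₀, ha₀s⟩ := by simp [hf, hxv]
      have h2 : f ⟨y, hy⟩ = ⟨y, hmem _ hy hyv⟩ := by simp [hf, hyv]
      by_cases hya : y = a₀
      · left; rw [h1, h2]; exact Subtype.ext hya.symm
      · right; rw [h1, h2]
        exact (adj_clique hab hac hbc ha₀ hy' (fun h => hya h.symm) : G.Adj a₀ y)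
    · have hxv : x ≠ v := by
        intro he
        rcases hx' with h|h|h
        exacts [hva (he.symm.trans h), hvb (he.symm.trans h), hvc (he.symm.trans h)]
      have h1 : f ⟨y, hy⟩ = ⟨a₀, ha₀s⟩ := by simp [hf, hyv]
      have h2 : f ⟨x, hx⟩ = ⟨x, hmem _ hx hxv⟩ := by simp [hf, hxv]
      by_cases hxa : x = a₀
      · left; rw [h1, h2]; exact Subtype.ext hxa
      · right; rw [h1, h2]
        exact ((adj_clique hab hac hbc ha₀ hx' (fun h => hxa h.symm)).symm : G.Adj x a₀)
  rintro ⟨x, hx⟩ ⟨y, hy⟩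
  have hxv : x ≠ v := fun he => hvs (he ▸ hx)
  have hyv : y ≠ v := fun he => hvs (he ▸ hy)
  have hr := hconn.preconnected ⟨x, Set.mem_insert_of_mem _ hx⟩ ⟨y, Set.mem_insert_of_mem _ hy⟩
  have h2 := reach_map f hfcond hr
  have hfx : f ⟨x, Set.mem_insert_of_mem _ hx⟩ = ⟨x, hx⟩ := by simp [hf, hxv]
  have hfy : f ⟨y, Set.mem_insert_of_mem _ hy⟩ = ⟨y, hy⟩ := by simp [hf, hyv]
  rwa [hfx, hfy] at h2

lemma not_connected_isolated {H : SimpleGraph ℕ} {v : ℕ} {s : Set ℕ}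
    (hv : ∀ w, H.Adj v w → w ∉ s) (hvs : v ∉ s) (hne : s.Nonempty) :
    ¬ (H.induce (insert v s)).Connected := by
  intro hconn
  obtain ⟨x, hx⟩ := hne
  obtain ⟨p⟩ := hconn.preconnected ⟨v, Set.mem_insert _ _⟩ ⟨x, Set.mem_insert_of_mem _ hx⟩
  cases p with
  | nil => exact hvs (by simpa using hx)
  | cons h q =>
    rename_i w
    have hadj : H.Adj v ↑w := h
    rcases Set.mem_insert_iff.1 w.2 with hw | hw
    · exact hadj.ne' hw
    · exact hv _ hadj hw

lemma exists_lt3_ne (x y : ℕ) : ∃ z, z < 3 ∧ z ≠ x ∧ z ≠ y := by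
  refine ⟨if 0 ≠ x ∧ 0 ≠ y then 0 else if 1 ≠ x ∧ 1 ≠ y then 1 else 2, ?_, ?_, ?_⟩ <;>
    split_ifs <;> omega

lemma K4n_support : K4n.support = {x | x < 4} := by
  ext x
  simp only [mem_support, Set.mem_setOf_eq]
  constructor
  · rintro ⟨y, _, hx, _⟩; exact hx
  · intro hx
    refine ⟨if x = 0 then 1 else 0, ?_, hx, ?_⟩ <;> split_ifs <;> omega

lemma K4n_support_ncard : K4n.support.ncard = 4 := by
  have : K4n.support = ↑(Finset.range 4) := by
    rw [K4n_support]; ext x; simp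
  rw [this, Set.ncard_coe_finset]
  rfl

lemma K4n_triangleSet : triangleSet K4n =
    {{0, 1, 2}, {0, 1, 3}, {0, 2, 3}, {1, 2, 3}} := by
  ext t
  simp only [Set.mem_insert_iff, Set.mem_singleton_iff]
  constructor
  · intro ht
    rw [mem_triangleSet_iff] at ht
    obtain ⟨hcard, hadj⟩ := ht
    have hsub : t ⊆ Finset.range 4 := by
      intro x hx
      have h2 : 1 < t.card := by omega
      obtain ⟨y, hy, hxy⟩ := Finset.exists_mem_ne h2 x
      have := hadj x hx y hy hxy.symm
      simp only [Finset.mem_range]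
      exact this.2.1
    have hmem : t ∈ (Finset.range 4).powerset.filter (fun u => u.card = 3) := by
      simp [Finset.mem_filter, Finset.mem_powerset, hsub, hcard]
    have heq : (Finset.range 4).powerset.filter (fun u => u.card = 3) =
        ({{0,1,2},{0,1,3},{0,2,3},{1,2,3}} : Finset (Finset ℕ)) := by decide
    rw [heq] at hmem
    simpa using hmem
  · have hA : ∀ x y : ℕ, x ≠ y → x < 4 → y < 4 → K4n.Adj x y := fun x y h hx hy => ⟨h, hx, hy⟩
    rintro (rfl | rfl | rfl | rfl)
    · exact ⟨0, 1, 2, rfl, hA _ _ (by omega) (by omega) (by omega),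
        hA _ _ (by omega) (by omega) (by omega), hA _ _ (by omega) (by omega) (by omega)⟩
    · exact ⟨0, 1, 3, rfl, hA _ _ (by omega) (by omega) (by omega),
        hA _ _ (by omega) (by omega) (by omega), hA _ _ (by omega) (by omega) (by omega)⟩
    · exact ⟨0, 2, 3, rfl, hA _ _ (by omega) (by omega) (by omega),
        hA _ _ (by omega) (by omega) (by omega), hA _ _ (by omega) (by omega) (by omega)⟩
    · exact ⟨1, 2, 3, rfl, hA _ _ (by omega) (by omega) (by omega),
        hA _ _ (by omega) (by omega) (by omega), hA _ _ (by omega) (by omega) (by omega)⟩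

lemma K4n_conn (s : Set ℕ) (hs : s.Nonempty) (hs4 : ∀ x ∈ s, x < 4) :
    (K4n.induce s).Connected := by
  rw [connected_iff]
  refine ⟨?_, ⟨⟨hs.choose, hs.choose_spec⟩⟩⟩
  rintro ⟨u, hu⟩ ⟨w, hw⟩
  by_cases h : u = w
  · subst h; exact Reachable.refl _
  · exact Adj.reachable (by exact (⟨h, hs4 u hu, hs4 w hw⟩ : K4n.Adj u w))

lemma K4n_conn3 (x y : ℕ) : (K4n.induce (K4n.support \ {x, y})).Connected := by
  apply K4n_conn
  · obtain ⟨z, hz3, hzx, hzy⟩ := exists_lt3_ne x y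
    exact ⟨z, by simp [K4n_support, Set.mem_diff, hzx, hzy]; omega⟩
  · intro z hz
    rw [K4n_support] at hz
    exact hz.1

lemma connected_singleton_induce (G : SimpleGraph ℕ) (x : ℕ) :
    (G.induce {x}).Connected := by
  rw [connected_iff]
  refine ⟨?_, ⟨⟨x, rfl⟩⟩⟩
  rintro ⟨u, hu⟩ ⟨w, hw⟩
  have : u = w := by
    simp only [Set.mem_singleton_iff] at hu hw
    rw [hu, hw]
  subst this
  have : hu = hw := rfl
  rw [this]


structure GoodInv (G : SimpleGraph ℕ) (Fs : Set (Finset ℕ)) : Prop where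
  supFin : G.support.Finite
  supCard : 4 ≤ G.support.ncard
  faces : Fs ⊆ triangleSet G
  sepEq : {t | IsSeparatingTriangle G t} = triangleSet G \ Fs
  sepCard : {t | IsSeparatingTriangle G t}.ncard = G.support.ncard - 4
  conn3 : ∀ x y : ℕ, (G.induce (G.support \ {x, y})).Connected

lemma apollonian_inv {G : SimpleGraph ℕ} {Fs : Set (Finset ℕ)}
    (h : ApollonianF G Fs) : GoodInv G Fs := by
  induction h with
  | base =>
    have hsepK : {t | IsSeparatingTriangle K4n t} = ∅ := by
      rw [Set.eq_empty_iff_forall_notMem]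
      rintro t ⟨htri, hnc⟩
      apply hnc
      rw [K4n_triangleSet] at htri
      rcases htri with rfl | rfl | rfl | rfl
      · have hs : K4n.support \ ↑({0,1,2} : Finset ℕ) = {3} := by
          rw [K4n_support]; ext z; simp; omega
        rw [hs]; exact connected_singleton_induce _ 3
      · have hs : K4n.support \ ↑({0,1,3} : Finset ℕ) = {2} := by
          rw [K4n_support]; ext z; simp; omega
        rw [hs]; exact connected_singleton_induce _ 2
      · have hs : K4n.support \ ↑({0,2,3} : Finset ℕ) = {1} := by
          rw [K4n_support]; ext z; simp; omega
        rw [hs]; exact connected_singleton_induce _ 1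
      · have hs : K4n.support \ ↑({1,2,3} : Finset ℕ) = {0} := by
          rw [K4n_support]; ext z; simp; omega
        rw [hs]; exact connected_singleton_induce _ 0
    refine ⟨?_, ?_, ?_, ?_, ?_, K4n_conn3⟩
    · rw [K4n_support]; exact Set.finite_Iio 4
    · rw [K4n_support_ncard]
    · rw [K4n_triangleSet]
    · rw [hsepK, K4n_triangleSet, Set.diff_self]
    · rw [hsepK, K4n_support_ncard]; simp
  | subdivide G Fs a b c v hap hmem hv ih =>
    have habc_tri : ({a,b,c} : Finset ℕ) ∈ triangleSet G := ih.faces hmem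
    obtain ⟨hcard3, hadjP⟩ := mem_triangleSet_iff.1 habc_tri
    have hab' : a ≠ b := by
      intro he; rw [he] at hcard3
      have h1 : ({b,b,c} : Finset ℕ) = {b,c} := by ext z; simp
      rw [h1] at hcard3
      have := Finset.card_insert_le b ({c} : Finset ℕ)
      simp at this; omega
    have hac' : a ≠ c := by
      intro he; rw [he] at hcard3
      have h1 : ({c,b,c} : Finset ℕ) = {b,c} := by ext z; simp; try tauto
      rw [h1] at hcard3
      have := Finset.card_insert_le b ({c} : Finset ℕ)
      simp at this; omega
    have hbc' : b ≠ c := by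
      intro he; rw [he] at hcard3
      have h1 : ({a,c,c} : Finset ℕ) = {a,c} := by ext z; simp
      rw [h1] at hcard3
      have := Finset.card_insert_le a ({c} : Finset ℕ)
      simp at this; omega
    have hab : G.Adj a b := hadjP a (by simp) b (by simp) hab'
    have hac : G.Adj a c := hadjP a (by simp) c (by simp) hac'
    have hbc : G.Adj b c := hadjP b (by simp) c (by simp) hbc'
    have hvs : v ∉ G.support := fun ⟨y, hy⟩ => hv y hy
    have ha : a ∈ G.support := triangle_subset_support habc_tri (by simp)
    have hb : b ∈ G.support := triangle_subset_support habc_tri (by simp)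
    have hc : c ∈ G.support := triangle_subset_support habc_tri (by simp)
    have hva : v ≠ a := fun h => hvs (h ▸ ha)
    have hvb : v ≠ b := fun h => hvs (h ▸ hb)
    have hvc : v ≠ c := fun h => hvs (h ▸ hc)
    set H := addApex G v a b c with hH
    set Fs' := (Fs \ {({a,b,c} : Finset ℕ)}) ∪ {{v,a,b},{v,a,c},{v,b,c}} with hFs'
    have hsup : H.support = insert v G.support := by
      rw [hH, addApex_support hv ha hb hc, Set.union_singleton]
    have hsupFin : H.support.Finite := by rw [hsup]; exact ih.supFin.insert v
    have hncard : H.support.ncard = G.support.ncard + 1 := by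
      rw [hsup, Set.ncard_insert_of_notMem hvs ih.supFin]
    have htri : triangleSet H = triangleSet G ∪ {{v,a,b},{v,a,c},{v,b,c}} :=
      addApex_triangleSet hv hab hac hbc
    have hv_not_tri : ∀ t ∈ triangleSet G, v ∉ t := by
      intro t ht hvt
      exact hvs (triangle_subset_support ht hvt)
    have hnew_ne : ∀ t ∈ triangleSet G,
        t ≠ ({v,a,b} : Finset ℕ) ∧ t ≠ ({v,a,c} : Finset ℕ) ∧ t ≠ ({v,b,c} : Finset ℕ) := by
      intro t ht
      refine ⟨?_, ?_, ?_⟩ <;> intro he <;> exact hv_not_tri t ht (he ▸ (by simp))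
    have hvadjH : ∀ w, H.Adj v w → w = a ∨ w = b ∨ w = c := by
      intro w hw
      rcases (addApex_adj hva hvb hvc).1 hw with h | ⟨_, h⟩ | ⟨h, _⟩
      · exact absurd h (hv w)
      · exact h
      · exact absurd h.symm hw.ne
    have hsetdiff : ∀ t : Finset ℕ, v ∉ t →
        H.support \ ↑t = insert v (G.support \ ↑t) := by
      intro t hvt
      rw [hsup]
      ext z
      simp only [Set.mem_diff, Set.mem_insert_iff, Finset.mem_coe]
      constructor
      · rintro ⟨rfl | hz, hzt⟩
        · exact Or.inl rfl
        · exact Or.inr ⟨hz, hzt⟩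
      · rintro (rfl | ⟨hz, hzt⟩)
        · exact ⟨Or.inl rfl, hvt⟩
        · exact ⟨Or.inr hz, hzt⟩
    have hout : ∀ t : Finset ℕ, t ∈ triangleSet G → ∃ x ∈ G.support, x ∉ t := by
      intro t ht
      by_contra hcon
      push_neg at hcon
      have hsub : G.support ⊆ ↑t := fun x hx => hcon x hx
      have h5 := Set.ncard_le_ncard hsub (Finset.finite_toSet t)
      rw [Set.ncard_coe_finset, (mem_triangleSet_iff.1 ht).1] at h5
      have := ih.supCard
      omega
    have habc_sep : ¬ (H.induce (H.support \ ↑({a,b,c} : Finset ℕ))).Connected := by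
      have hvnot : v ∉ ({a,b,c} : Finset ℕ) := by simp [hva, hvb, hvc]
      rw [hsetdiff _ hvnot]
      apply not_connected_isolated
      · intro w hw hws
        rcases hvadjH w hw with rfl | rfl | rfl <;> simp at hws
      · intro hvmem
        exact hvs hvmem.1
      · obtain ⟨x, hx, hxt⟩ := hout _ habc_tri
        exact ⟨x, hx, by simpa using hxt⟩
    have hkey : ∀ t : Finset ℕ, t ∈ triangleSet G → t ≠ ({a,b,c} : Finset ℕ) →
        ∃ a₀, (a₀ = a ∨ a₀ = b ∨ a₀ = c) ∧ a₀ ∈ G.support \ ↑t := by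
      intro t ht hne
      have hnotall : ¬ (a ∈ t ∧ b ∈ t ∧ c ∈ t) := by
        rintro ⟨h1, h2, h3⟩
        apply hne
        apply (Finset.eq_of_subset_of_card_le ?_ ?_).symm
        · intro z hz
          simp only [Finset.mem_insert, Finset.mem_singleton] at hz
          rcases hz with rfl | rfl | rfl <;> assumption
        · rw [hcard3, (mem_triangleSet_iff.1 ht).1]
      by_cases h1 : a ∈ t
      · by_cases h2 : b ∈ t
        · refine ⟨c, Or.inr (Or.inr rfl), hc, ?_⟩
          simp only [Finset.mem_coe]
          intro h3
          exact hnotall ⟨h1, h2, h3⟩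
        · exact ⟨b, Or.inr (Or.inl rfl), hb, by simpa using h2⟩
      · exact ⟨a, Or.inl rfl, ha, by simpa using h1⟩
    have hconn_pres : ∀ t : Finset ℕ, t ∈ triangleSet G → t ≠ ({a,b,c} : Finset ℕ) →
        ((G.induce (G.support \ ↑t)).Connected ↔
          (H.induce (H.support \ ↑t)).Connected) := by
      intro t ht htne
      have hvt : v ∉ t := hv_not_tri t ht
      obtain ⟨a₀, ha₀, ha₀s⟩ := hkey t ht htne
      rw [hsetdiff t hvt]
      constructor
      · intro hco
        exact connected_insert_apex hva hvb hvc ha₀s ha₀ hco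
      · intro hco
        by_contra hdis
        exact not_connected_insert_apex hv hab hac hbc
          (fun hvm => hvs hvm.1) ha₀s ha₀ hdis hco
    have hnewconn : ∀ p q : ℕ, (p = a ∨ p = b) → (q = b ∨ q = c) → p ≠ q →
        (H.induce (H.support \ ↑({v,p,q} : Finset ℕ))).Connected := by
      intro p q hp hq hpq
      have hset : H.support \ ↑({v,p,q} : Finset ℕ) = G.support \ {p, q} := by
        rw [hsup]
        ext z
        simp only [Set.mem_diff, Set.mem_insert_iff, Finset.coe_insert,
          Finset.coe_singleton, Set.mem_singleton_iff]
        constructor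
        · rintro ⟨rfl | hz, hzt⟩
          · exact absurd (Or.inl rfl) hzt
          · exact ⟨hz, fun h => hzt (Or.inr h)⟩
        · rintro ⟨hz, hzt⟩
          refine ⟨Or.inr hz, ?_⟩
          rintro (rfl | h)
          · exact hvs hz
          · exact hzt h
      rw [hset, induce_addApex_eq hva hvb hvc (fun hvm => hvs hvm.1)]
      exact ih.conn3 p q
    have hGconn_of_face : ∀ t : Finset ℕ, t ∈ Fs →
        (G.induce (G.support \ ↑t)).Connected := by
      intro t htF
      by_contra hdis
      have : t ∈ {t | IsSeparatingTriangle G t} := ⟨ih.faces htF, hdis⟩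
      rw [ih.sepEq] at this
      exact this.2 htF
    have hnc_of_new : ∀ t : Finset ℕ,
        t ∈ ({{v,a,b},{v,a,c},{v,b,c}} : Set (Finset ℕ)) →
        (H.induce (H.support \ ↑t)).Connected := by
      intro t ht
      rcases ht with rfl | rfl | rfl
      · exact hnewconn a b (Or.inl rfl) (Or.inl rfl) hab'
      · exact hnewconn a c (Or.inl rfl) (Or.inr rfl) hac'
      · exact hnewconn b c (Or.inr rfl) (Or.inr rfl) hbc'
    have hsepEq : {t | IsSeparatingTriangle H t} = triangleSet H \ Fs' := by
      ext t
      simp only [Set.mem_setOf_eq, IsSeparatingTriangle, Set.mem_diff]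
      constructor
      · rintro ⟨htriH, hnc⟩
        refine ⟨htriH, ?_⟩
        intro htF
        apply hnc
        rcases (Set.mem_union _ _ _).1 htF with hold | hnew
        · have htG : t ∈ triangleSet G := ih.faces hold.1
          have htne : t ≠ ({a,b,c} : Finset ℕ) := by
            intro he
            exact hold.2 (by rw [he]; rfl)
          exact (hconn_pres t htG htne).1 (hGconn_of_face t hold.1)
        · exact hnc_of_new t hnew
      · rintro ⟨htriH, hnF⟩
        refine ⟨htriH, ?_⟩
        rcases (htri ▸ htriH : t ∈ triangleSet G ∪ _) with htG | hnew
        · by_cases he : t = ({a,b,c} : Finset ℕ)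
          · rw [he]; exact habc_sep
          · have htF : t ∉ Fs := by
              intro h
              exact hnF (Or.inl ⟨h, by simpa using he⟩)
            have hsep : t ∈ {t | IsSeparatingTriangle G t} := by
              rw [ih.sepEq]; exact ⟨htG, htF⟩
            intro hco
            exact hsep.2 ((hconn_pres t htG he).2 hco)
        · exact absurd (Or.inr hnew) hnF
    have hSep_insert : {t | IsSeparatingTriangle H t} =
        insert ({a,b,c} : Finset ℕ) {t | IsSeparatingTriangle G t} := by
      rw [hsepEq, ih.sepEq]
      ext t
      simp only [Set.mem_diff, Set.mem_insert_iff]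
      constructor
      · rintro ⟨htriH, hnF⟩
        rcases (htri ▸ htriH : t ∈ triangleSet G ∪ _) with htG | hnew
        · by_cases he : t = ({a,b,c} : Finset ℕ)
          · exact Or.inl he
          · refine Or.inr ⟨htG, ?_⟩
            intro h
            exact hnF (Or.inl ⟨h, by simpa using he⟩)
        · exact absurd (Or.inr hnew) hnF
      · rintro (rfl | ⟨htG, htF⟩)
        · refine ⟨htri ▸ Or.inl habc_tri, ?_⟩
          rintro (h | h)
          · exact h.2 rfl
          · rcases h with h | h | h
            · exact (hnew_ne _ habc_tri).1 h
            · exact (hnew_ne _ habc_tri).2.1 h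
            · exact (hnew_ne _ habc_tri).2.2 h
        · refine ⟨htri ▸ Or.inl htG, ?_⟩
          rintro (h | h)
          · exact htF h.1
          · rcases h with h | h | h
            · exact (hnew_ne _ htG).1 h
            · exact (hnew_ne _ htG).2.1 h
            · exact (hnew_ne _ htG).2.2 h
    have habc_notsep : ({a,b,c} : Finset ℕ) ∉ {t | IsSeparatingTriangle G t} := by
      rw [ih.sepEq]
      exact fun h => h.2 hmem
    have hsepFin : {t | IsSeparatingTriangle G t}.Finite := by
      rw [ih.sepEq]
      exact (triangleSet_finite ih.supFin).diff
    have hsepCard : {t | IsSeparatingTriangle H t}.ncard = H.support.ncard - 4 := by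
      rw [hSep_insert, Set.ncard_insert_of_notMem habc_notsep hsepFin, ih.sepCard, hncard]
      have := ih.supCard
      omega
    have hfaces : Fs' ⊆ triangleSet H := by
      rintro t (⟨hF, _⟩ | hN)
      · exact htri ▸ Or.inl (ih.faces hF)
      · exact htri ▸ Or.inr hN
    have hconn3 : ∀ x y : ℕ, (H.induce (H.support \ {x, y})).Connected := by
      intro x y
      by_cases hvxy : v = x ∨ v = y
      · have hset : H.support \ {x, y} = G.support \ {x, y} := by
          rw [hsup]
          ext z
          simp only [Set.mem_diff, Set.mem_insert_iff, Set.mem_singleton_iff]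
          constructor
          · rintro ⟨rfl | hz, hzt⟩
            · exact absurd hvxy hzt
            · exact ⟨hz, hzt⟩
          · rintro ⟨hz, hzt⟩
            exact ⟨Or.inr hz, hzt⟩
        rw [hset, induce_addApex_eq hva hvb hvc (fun h => hvs h.1)]
        exact ih.conn3 x y
      · push_neg at hvxy
        obtain ⟨hvx, hvy⟩ := hvxy
        have hset : H.support \ {x, y} = insert v (G.support \ {x, y}) := by
          rw [hsup]
          ext z
          simp only [Set.mem_diff, Set.mem_insert_iff, Set.mem_singleton_iff]
          constructor
          · rintro ⟨rfl | hz, hzt⟩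
            · exact Or.inl rfl
            · exact Or.inr ⟨hz, hzt⟩
          · rintro (rfl | ⟨hz, hzt⟩)
            · exact ⟨Or.inl rfl, fun h => by rcases h with h | h; exacts [hvx h, hvy h]⟩
            · exact ⟨Or.inr hz, hzt⟩
        obtain ⟨a₀, ha₀m, ha₀x, ha₀y, ha₀sup⟩ :
            ∃ a₀, (a₀ = a ∨ a₀ = b ∨ a₀ = c) ∧ a₀ ≠ x ∧ a₀ ≠ y ∧ a₀ ∈ G.support := by
          by_cases h1 : a ≠ x ∧ a ≠ y
          · exact ⟨a, Or.inl rfl, h1.1, h1.2, ha⟩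
          · by_cases h2 : b ≠ x ∧ b ≠ y
            · exact ⟨b, Or.inr (Or.inl rfl), h2.1, h2.2, hb⟩
            · push_neg at h1 h2
              have haxy : a = x ∨ a = y := by
                by_cases hax : a = x
                · exact Or.inl hax
                · exact Or.inr (h1 hax)
              have hbxy : b = x ∨ b = y := by
                by_cases hbx : b = x
                · exact Or.inl hbx
                · exact Or.inr (h2 hbx)
              refine ⟨c, Or.inr (Or.inr rfl), ?_, ?_, hc⟩
              · intro he
                rcases haxy with h | h
                · exact hac' (h.trans he.symm)
                · rcases hbxy with h2' | h2'
                  · exact hbc' (h2'.trans he.symm)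
                  · exact hab' (h.trans h2'.symm)
              · intro he
                rcases haxy with h | h
                · rcases hbxy with h2' | h2'
                  · exact hab' (h.trans h2'.symm)
                  · exact hbc' (h2'.trans he.symm)
                · exact hac' (h.trans he.symm)
        rw [hset]
        refine connected_insert_apex hva hvb hvc
          (⟨ha₀sup, ?_⟩ : a₀ ∈ G.support \ {x, y}) ha₀m (ih.conn3 x y)
        simp [ha₀x, ha₀y]
    exact ⟨hsupFin, by have := ih.supCard; omega, hfaces, hsepEq, hsepCard, hconn3⟩

/-- An Apollonian network with `n` vertices has exactly `n - 4`
separating triangles. -/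
theorem stmt_1 (G : SimpleGraph ℕ) (hG : IsApollonian G) (n : ℕ)
    (hn : G.support.ncard = n) :
    {t : Finset ℕ | IsSeparatingTriangle G t}.ncard = n - 4 := by
  obtain ⟨Fs, hF⟩ := hG
  have inv := apollonian_inv hF
  rw [← hn]
  exact inv.sepCard
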